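/- arXiv:1701.08392 — 3 statements merged into one kernel-verified Lean document; each statement's English description precedes it below -/
import Mathlib

section
/- Consider the bang-bang control sequence Uₙ(t) = (-1)^k for t ∈ [kT/n, (k+1)T/n), 0 ≤ k ≤ n-1. Then the corresponding trajectory satisfies |X^{Uₙ}(t)| ≤ T/n for all t ∈ [0,T], and consequently J(Uₙ) ≤ T³/n². -/
/-- For the bang-bang control `Uₙ(t) = (-1)^k` on `[kT/n, (k+1)T/n)`, the
trajectory `X^{Uₙ}(t) = ∫₀ᵗ Uₙ(s) ds` satisfies `|X^{Uₙ}(t)| ≤ T/n` on `[0,T]`,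
and consequently `J(Uₙ) = ∫₀ᵀ X^{Uₙ}(t)² dt ≤ T³/n²`. -/
theorem bang_bang_estimate (T : ℝ) (hT : 0 < T) (n : ℕ) (hn : 1 ≤ n)
    (U : ℝ → ℝ) (hU : ∀ t, U t = (-1 : ℝ) ^ (⌊t * n / T⌋.toNat)) :
    (∀ t ∈ Set.Icc (0 : ℝ) T, |∫ s in (0 : ℝ)..t, U s| ≤ T / n) ∧
      (∫ t in (0 : ℝ)..T, (∫ s in (0 : ℝ)..t, U s) ^ 2) ≤ T ^ 3 / n ^ 2 := by
  have hn0 : (0 : ℝ) < n := by exact_mod_cast hn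
  set c : ℝ := T / n with hc
  have hc0 : 0 < c := div_pos hT hn0
  -- measurability and integrability of U
  have hUmeas : Measurable U := by
    have : Measurable fun t : ℝ => (-1 : ℝ) ^ (⌊t * n / T⌋.toNat) :=
      (measurable_from_top (f := fun m : ℤ => (-1 : ℝ) ^ m.toNat)).comp
        ((measurable_id.mul_const _).div_const _).floor
    simp only [funext hU]; exact this
  have hUbd : ∀ t, |U t| ≤ 1 := by
    intro t
    rw [hU]
    rw [abs_pow, abs_neg, abs_one, one_pow]
  have hUint : ∀ a b : ℝ, IntervalIntegrable U MeasureTheory.volume a b := by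
    intro a b
    rw [intervalIntegrable_iff]
    apply MeasureTheory.Measure.integrableOn_of_bounded measure_Ioc_lt_top.ne
      hUmeas.aestronglyMeasurable
    filter_upwards with t using hUbd t
  -- U constant on blocks
  have hblock : ∀ (k : ℕ) (s : ℝ), k * c ≤ s → s < (k + 1) * c → U s = (-1 : ℝ) ^ k := by
    intro k s h1 h2
    rw [hU]
    congr 2
    have hfl : ⌊s * n / T⌋ = k := by
      rw [Int.floor_eq_iff]
      constructor
      · push_cast
        rw [le_div_iff₀ hT]
        calc (k : ℝ) * T = (k * c) * n := by rw [hc, mul_assoc, div_mul_cancel₀ _ hn0.ne']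
          _ ≤ s * n := by nlinarith
      · push_cast
        rw [div_lt_iff₀ hT]
        calc s * n < ((k + 1) * c) * n := by nlinarith
          _ = (k + 1) * T := by rw [hc, mul_assoc, div_mul_cancel₀ _ hn0.ne']
    rw [hfl]; simp
  -- integral on a partial block
  have hseg : ∀ (k : ℕ) (t : ℝ), k * c ≤ t → t ≤ (k + 1) * c →
      (∫ s in (k * c)..t, U s) = (-1 : ℝ) ^ k * (t - k * c) := by
    intro k t h1 h2
    have hcongr : (∫ s in (k * c)..t, U s) = ∫ s in (k * c)..t, (-1 : ℝ) ^ k := by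
      apply intervalIntegral.integral_congr_ae
      have hne : ∀ᵐ s : ℝ, s ≠ (k + 1) * c := by
        rw [MeasureTheory.ae_iff]
        simpa using MeasureTheory.measure_singleton ((k + 1 : ℝ) * c)
      filter_upwards [hne] with s hs hmem
      rw [Set.uIoc_of_le h1] at hmem
      exact hblock k s hmem.1.le (lt_of_le_of_ne (hmem.2.trans h2) hs)
    rw [hcongr, intervalIntegral.integral_const, smul_eq_mul, mul_comm]
  -- value at block boundaries
  have hbd : ∀ k : ℕ, (∫ s in (0 : ℝ)..(k * c), U s) = if Even k then 0 else c := by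
    intro k
    induction k with
    | zero => simp
    | succ k ih =>
      have hsplit : (∫ s in (0 : ℝ)..((k + 1 : ℕ) * c), U s)
          = (∫ s in (0 : ℝ)..(k * c), U s) + ∫ s in (k * c)..((k + 1 : ℕ) * c), U s := by
        rw [intervalIntegral.integral_add_adjacent_intervals (hUint _ _) (hUint _ _)]
      have hkc : ((k : ℝ) + 1) * c = ((k + 1 : ℕ) : ℝ) * c := by push_cast; ring
      have hseg' := hseg k ((k + 1 : ℕ) * c) (by push_cast; nlinarith) (by push_cast; nlinarith)
      rw [hsplit, ih, hseg']
      rcases Nat.even_or_odd k with he | ho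
      · simp [he, Nat.even_add_one, he.neg_one_pow]
        ring
      · have : ¬ Even k := Nat.not_even_iff_odd.mpr ho
        simp [this, Nat.even_add_one, ho.neg_one_pow]
        ring
  -- main pointwise bound: 0 ≤ X t ≤ c for t ≥ 0
  have hX : ∀ t : ℝ, 0 ≤ t → (0 ≤ ∫ s in (0:ℝ)..t, U s) ∧ (∫ s in (0:ℝ)..t, U s) ≤ c := by
    intro t ht
    set k := ⌊t / c⌋.toNat with hk
    have htn : (0 : ℤ) ≤ ⌊t / c⌋ :=
      Int.floor_nonneg.mpr (show (0 : ℝ) ≤ t / c by positivity)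
    have hkk : ((k : ℕ) : ℝ) = ((⌊t / c⌋ : ℤ) : ℝ) := by
      rw [hk]; exact_mod_cast Int.toNat_of_nonneg htn
    have hk1 : (k : ℝ) * c ≤ t := by
      have h1 : (k : ℝ) ≤ t / c := by rw [hkk]; exact Int.floor_le _
      calc (k : ℝ) * c ≤ (t / c) * c := by nlinarith
        _ = t := by field_simp
    have hk2 : t < ((k : ℝ) + 1) * c := by
      have h2 : t / c < (k : ℝ) + 1 := by rw [hkk]; exact Int.lt_floor_add_one _
      calc t = (t / c) * c := by field_simp
        _ < ((k : ℝ) + 1) * c := by nlinarith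
    have hsplit : (∫ s in (0 : ℝ)..t, U s)
        = (∫ s in (0 : ℝ)..(k * c), U s) + ∫ s in ((k : ℝ) * c)..t, U s := by
      rw [intervalIntegral.integral_add_adjacent_intervals (hUint _ _) (hUint _ _)]
    rw [hsplit, hbd k, hseg k t hk1 hk2.le]
    rcases Nat.even_or_odd k with he | ho
    · simp [he, he.neg_one_pow]
      constructor <;> nlinarith
    · have : ¬ Even k := Nat.not_even_iff_odd.mpr ho
      simp [this, ho.neg_one_pow]
      constructor <;> nlinarith
  have habs : ∀ t ∈ Set.Icc (0 : ℝ) T, |∫ s in (0 : ℝ)..t, U s| ≤ T / n := by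
    intro t ht
    obtain ⟨h1, h2⟩ := hX t ht.1
    rw [abs_of_nonneg h1]; exact h2
  refine ⟨habs, ?_⟩
  -- continuity of the primitive, hence integrability of its square
  have hcont : Continuous fun t : ℝ => ∫ s in (0 : ℝ)..t, U s :=
    intervalIntegral.continuous_primitive hUint 0
  have hint2 : IntervalIntegrable (fun t => (∫ s in (0 : ℝ)..t, U s) ^ 2)
      MeasureTheory.volume 0 T := ((hcont.pow 2).intervalIntegrable 0 T)
  have hmono : (∫ t in (0 : ℝ)..T, (∫ s in (0 : ℝ)..t, U s) ^ 2)
      ≤ ∫ t in (0 : ℝ)..T, c ^ 2 := by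
    apply intervalIntegral.integral_mono_on hT.le hint2 intervalIntegrable_const
    intro t ht
    obtain ⟨h1, h2⟩ := hX t ht.1
    nlinarith
  calc (∫ t in (0 : ℝ)..T, (∫ s in (0 : ℝ)..t, U s) ^ 2) ≤ ∫ t in (0 : ℝ)..T, c ^ 2 := hmono
    _ = T * c ^ 2 := by rw [intervalIntegral.integral_const, smul_eq_mul]; ring
    _ = T ^ 3 / n ^ 2 := by rw [hc]; field_simp
end

section
/- Measurable selection for relaxed controls: Let K be a compact metric space and F : [0,T]×Ω×K → ℝ^m a bounded measurable function, continuous in u ∈ K, progressively measurable in (t,ω). Let q(t,ω,du) be a progressively measurable family of probability measures on K. If for each (t,ω) the set F(t,ω,K) := {F(t,ω,u) : u ∈ K} is convex, then there exists a progressively measurable K-valued process Û(t,ω) such that ∫_K F(t,ω,u) q(t,ω,du) = F(t,ω,Û(t,ω)) for a.e. (t,ω). -/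
open MeasureTheory Filter Topology Set

namespace RelaxedSel

attribute [local instance] Classical.propDecidable

variable (K : Type*) [MetricSpace K] [CompactSpace K] [Nonempty K]

noncomputable instance : MeasurableSpace C(K, ℝ) := borel _
instance : BorelSpace C(K, ℝ) := ⟨rfl⟩

noncomputable def us : ℕ → K := TopologicalSpace.denseSeq K

lemma dense_us : DenseRange (us K) := TopologicalSpace.denseRange_denseSeq K

variable {K}

/-- radius sequence -/
noncomputable def rr (k : ℕ) : ℝ := (1/2 : ℝ) ^ k

lemma rr_pos (k : ℕ) : 0 < rr k := pow_pos (by norm_num) k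

/-- existence of a minimizer -/
lemma exists_min (g : C(K, ℝ)) : ∃ z, ∀ w, g z ≤ g w := by
  obtain ⟨z, -, hz⟩ := isCompact_univ.exists_isMinOn univ_nonempty g.continuous.continuousOn
  exact ⟨z, fun w => hz (mem_univ w)⟩

/-- the set of `g` whose minimizer set meets the closed ball around `us n` of radius `rr k` -/
def A (n k : ℕ) : Set C(K, ℝ) := {g | ∃ z, dist z (us K n) ≤ rr k ∧ ∀ w, g z ≤ g w}

/-- infimum of `g` over the dense points -/
noncomputable def minval (g : C(K, ℝ)) : ℝ := ⨅ j : ℕ, g (us K j)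

lemma bddBelow_range (g : C(K, ℝ)) {ι : Sort*} (v : ι → K) :
    BddBelow (Set.range fun j => g (v j)) := by
  obtain ⟨z, hz⟩ := exists_min g
  exact ⟨g z, by rintro x ⟨j, rfl⟩; exact hz _⟩

lemma minval_eq {g : C(K, ℝ)} {z : K} (hz : ∀ w, g z ≤ g w) : minval g = g z := by
  refine le_antisymm ?_ (le_ciInf fun j => hz _)
  refine le_of_forall_pos_le_add fun ε hε => ?_
  obtain ⟨δ, hδ, hcont⟩ := Metric.continuousAt_iff.1 (g.continuous.continuousAt (x := z))
    ε hε
  obtain ⟨j, hj⟩ := (Metric.denseRange_iff.1 (dense_us K)) z δ hδ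
  refine (ciInf_le (bddBelow_range g _) j).trans ?_
  have := hcont (x := us K j) (by rwa [dist_comm] at hj)
  have h2 : g (us K j) - g z < ε := (le_abs_self _).trans_lt (by simpa [Real.dist_eq] using this)
  linarith

lemma minval_le (g : C(K, ℝ)) (w : K) : minval g ≤ g w := by
  obtain ⟨z, hz⟩ := exists_min g
  rw [minval_eq hz]; exact hz w

/-- infimum of `g` over dense points in an open ball around `us n` -/
noncomputable def oinf (n k l : ℕ) (g : C(K, ℝ)) : ℝ :=
  ⨅ j : {j : ℕ // dist (us K j) (us K n) < rr k + 1 / (l + 1)}, g (us K (j : ℕ))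

lemma oball_pos (k l : ℕ) : (0:ℝ) < rr k + 1 / (l + 1) := by
  have := rr_pos k
  have : (0:ℝ) < 1 / (l + 1 : ℝ) := by positivity
  linarith [rr_pos k]

instance oinf_nonempty (n k l : ℕ) :
    Nonempty {j : ℕ // dist (us K j) (us K n) < rr k + 1 / (l + 1)} :=
  ⟨⟨n, by simpa using oball_pos k l⟩⟩

lemma A_eq (n k : ℕ) :
    A (K := K) n k = ⋂ l : ℕ, {g | oinf n k l g ≤ minval g} := by
  ext g
  simp only [Set.mem_iInter, Set.mem_setOf_eq]
  constructor
  · rintro ⟨z, hz1, hz2⟩ l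
    rw [minval_eq hz2]
    refine le_of_forall_pos_le_add fun ε hε => ?_
    obtain ⟨δ, hδ, hcont⟩ := Metric.continuousAt_iff.1 (g.continuous.continuousAt (x := z)) ε hε
    obtain ⟨j, hj⟩ := (Metric.denseRange_iff.1 (dense_us K)) z
      (min δ (1 / (l + 1))) (lt_min hδ (by positivity))
    rw [dist_comm] at hj
    have hjmem : dist (us K j) (us K n) < rr k + 1 / (l + 1) := by
      calc dist (us K j) (us K n) ≤ dist (us K j) z + dist z (us K n) := dist_triangle _ _ _
      _ < 1 / (l + 1) + rr k := by
          have := hj.trans_le (min_le_right _ _)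
          exact add_lt_add_of_lt_of_le this hz1
      _ = rr k + 1 / (l + 1) := by ring
    refine (ciInf_le (bddBelow_range g _) ⟨j, hjmem⟩).trans ?_
    have := hcont (x := us K j) (hj.trans_le (min_le_left _ _))
    have h2 : g (us K j) - g z < ε := (le_abs_self _).trans_lt (by simpa [Real.dist_eq] using this)
    linarith
  · intro h
    -- extract approximate minimizers in shrinking balls
    have hex : ∀ l : ℕ, ∃ w : K, dist w (us K n) < rr k + 1 / (l + 1) ∧
        g w < minval g + 1 / (l + 1) := by
      intro l
      have hlt : oinf n k l g < minval g + 1 / (l + 1) :=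
        (h l).trans_lt (lt_add_of_pos_right _ (by positivity))
      obtain ⟨⟨j, hj⟩, hjv⟩ := exists_lt_of_ciInf_lt hlt
      exact ⟨us K j, hj, hjv⟩
    choose w hw1 hw2 using hex
    obtain ⟨z, -, φ, hφ, hconv⟩ := isCompact_univ.tendsto_subseq (fun l => Set.mem_univ (w l))
    have hone : Tendsto (fun l : ℕ => 1 / ((l : ℝ) + 1)) atTop (𝓝 0) :=
      tendsto_one_div_add_atTop_nhds_zero_nat
    have hone' : ∀ l : ℕ, 1 / ((φ l : ℝ) + 1) ≤ 1 / ((l : ℝ) + 1) := by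
      intro l
      have : (l : ℝ) + 1 ≤ (φ l : ℝ) + 1 := by
        have h3 : l ≤ φ l := hφ.le_apply
        have h4 : (l : ℝ) ≤ (φ l : ℝ) := Nat.cast_le.2 h3
        linarith
      exact one_div_le_one_div_of_le (by positivity) this
    refine ⟨z, ?_, ?_⟩
    · -- dist z (us n) ≤ rr k
      have h1 : Tendsto (fun l => dist (w (φ l)) (us K n)) atTop (𝓝 (dist z (us K n))) :=
        (hconv.dist tendsto_const_nhds)
      have h2 : Tendsto (fun l : ℕ => rr k + 1 / ((l : ℝ) + 1)) atTop (𝓝 (rr k)) := by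
        simpa using tendsto_const_nhds.add hone
      refine le_of_tendsto_of_tendsto' h1 h2 fun l => ?_
      exact (hw1 (φ l)).le.trans (by linarith [hone' l])
    · -- z is a global minimizer
      intro v
      have h1 : Tendsto (fun l => g (w (φ l))) atTop (𝓝 (g z)) :=
        (g.continuous.tendsto _).comp hconv
      have h2 : Tendsto (fun l : ℕ => minval g + 1 / ((l : ℝ) + 1)) atTop (𝓝 (minval g)) := by
        simpa using tendsto_const_nhds.add hone
      have hgz : g z ≤ minval g :=
        le_of_tendsto_of_tendsto' h1 h2 fun l => (hw2 (φ l)).le.trans (by linarith [hone' l])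
      exact hgz.trans (minval_le g v)

lemma measurable_minval : Measurable (minval (K := K)) :=
  Measurable.iInf fun j => (continuous_eval_const (us K j)).measurable

lemma measurable_oinf (n k l : ℕ) : Measurable (oinf (K := K) n k l) :=
  Measurable.iInf fun j => (continuous_eval_const (us K (j : ℕ))).measurable

lemma measurableSet_A (n k : ℕ) : MeasurableSet (A (K := K) n k) := by
  rw [A_eq]
  exact MeasurableSet.iInter fun l =>
    measurableSet_le (measurable_oinf n k l) measurable_minval

lemma exists_A0 (g : C(K, ℝ)) : ∃ n, g ∈ A n 0 := by
  obtain ⟨z, hz⟩ := exists_min g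
  obtain ⟨n, hn⟩ := (Metric.denseRange_iff.1 (dense_us K)) z (rr 0) (rr_pos 0)
  exact ⟨n, z, hn.le, hz⟩

lemma exists_step {g : C(K, ℝ)} {n k : ℕ} (h : g ∈ A n k) :
    ∃ n', g ∈ A n' (k + 1) ∧ dist (us K n') (us K n) ≤ rr (k + 1) + rr k := by
  obtain ⟨z, hz1, hz2⟩ := h
  obtain ⟨n', hn'⟩ := (Metric.denseRange_iff.1 (dense_us K)) z (rr (k+1)) (rr_pos _)
  refine ⟨n', ⟨z, hn'.le, hz2⟩, ?_⟩
  calc dist (us K n') (us K n) ≤ dist (us K n') z + dist z (us K n) := dist_triangle _ _ _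
  _ ≤ rr (k+1) + rr k := add_le_add (by rw [dist_comm]; exact hn'.le) hz1

/-- the recursive index sequence -/
noncomputable def N : ℕ → C(K, ℝ) → ℕ
  | 0, g => Nat.find (exists_A0 g)
  | (k+1), g =>
      if h : ∃ n', g ∈ A n' (k + 1) ∧ dist (us K n') (us K (N k g)) ≤ rr (k + 1) + rr k
      then Nat.find h else 0

lemma mem_A_N : ∀ (k : ℕ) (g : C(K, ℝ)), g ∈ A (N k g) k := by
  intro k
  induction k with
  | zero => intro g; exact Nat.find_spec (exists_A0 g)
  | succ k ih =>
    intro g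
    have h : ∃ n', g ∈ A n' (k + 1) ∧ dist (us K n') (us K (N k g)) ≤ rr (k + 1) + rr k :=
      exists_step (ih g)
    simp only [N, dif_pos h]
    exact (Nat.find_spec h).1

lemma N_succ_eq (k : ℕ) (g : C(K, ℝ))
    (h : ∃ n', g ∈ A n' (k + 1) ∧ dist (us K n') (us K (N k g)) ≤ rr (k + 1) + rr k) :
    N (k+1) g = Nat.find h := by simp only [N, dif_pos h]

lemma dist_N_succ (k : ℕ) (g : C(K, ℝ)) :
    dist (us K (N (k+1) g)) (us K (N k g)) ≤ rr (k + 1) + rr k := by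
  have h : ∃ n', g ∈ A n' (k + 1) ∧ dist (us K n') (us K (N k g)) ≤ rr (k + 1) + rr k :=
    exists_step (mem_A_N k g)
  simp only [N, dif_pos h]
  exact (Nat.find_spec h).2

lemma measurable_N : ∀ k : ℕ, Measurable (N (K := K) k) := by
  intro k
  induction k with
  | zero =>
    refine measurable_find _ fun n => ?_
    exact measurableSet_A n 0
  | succ k ih =>
    have hNeq : ∀ g : C(K, ℝ), N (k+1) g = Nat.find (exists_step (mem_A_N k g)) :=
      fun g => N_succ_eq k g _
    have : Measurable fun g : C(K,ℝ) => Nat.find (exists_step (mem_A_N k g)) := by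
      refine measurable_find _ fun n => ?_
      have : {g : C(K,ℝ) | g ∈ A n (k+1) ∧ dist (us K n) (us K (N k g)) ≤ rr (k+1) + rr k}
          = A n (k+1) ∩ ((N k) ⁻¹' {j | dist (us K n) (us K j) ≤ rr (k+1) + rr k}) := rfl
      rw [this]
      exact (measurableSet_A n (k+1)).inter (ih (MeasurableSet.of_discrete))
    simpa only [← hNeq] using this

/-- the approximating sequence of points -/
noncomputable def V (k : ℕ) (g : C(K, ℝ)) : K := us K (N k g)

lemma cauchy_V (g : C(K, ℝ)) : CauchySeq fun k => V k g := by
  refine cauchySeq_of_le_geometric (1/2) 3 (by norm_num) fun n => ?_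
  rw [dist_comm]
  calc dist (V (n+1) g) (V n g) ≤ rr (n+1) + rr n := dist_N_succ n g
  _ ≤ 3 * (1/2)^n := by
      simp only [rr, pow_succ]
      nlinarith [pow_pos (by norm_num : (0:ℝ) < 1/2) n]

/-- the measurable argmin selection -/
noncomputable def Sel (g : C(K, ℝ)) : K :=
  (cauchySeq_tendsto_of_complete (cauchy_V g)).choose

lemma tendsto_V (g : C(K, ℝ)) : Tendsto (fun k => V k g) atTop (𝓝 (Sel g)) :=
  (cauchySeq_tendsto_of_complete (cauchy_V g)).choose_spec

lemma measurable_Sel [MeasurableSpace K] [BorelSpace K] : Measurable (Sel (K := K)) := by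
  have hV : ∀ k, Measurable (fun g : C(K,ℝ) => V k g) :=
    fun k => measurable_from_top.comp (measurable_N k)
  exact measurable_of_tendsto_metrizable hV (tendsto_pi_nhds.2 fun g => tendsto_V g)

lemma Sel_isMin (g : C(K, ℝ)) (w : K) : g (Sel g) ≤ g w := by
  -- choose minimizers z k near V k g
  have hz : ∀ k : ℕ, ∃ z, dist z (V k g) ≤ rr k ∧ ∀ w, g z ≤ g w := fun k => mem_A_N k g
  choose z hz1 hz2 using hz
  have hzt : Tendsto z atTop (𝓝 (Sel g)) := by
    rw [tendsto_iff_dist_tendsto_zero]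
    have h1 : ∀ k, dist (z k) (Sel g) ≤ rr k + dist (V k g) (Sel g) := fun k =>
      (dist_triangle _ _ _).trans (add_le_add (hz1 k) le_rfl)
    have h2 : Tendsto (fun k => rr k + dist (V k g) (Sel g)) atTop (𝓝 0) := by
      have ha : Tendsto (fun k : ℕ => rr k) atTop (𝓝 0) :=
        tendsto_pow_atTop_nhds_zero_of_lt_one (by norm_num) (by norm_num)
      have hb : Tendsto (fun k => dist (V k g) (Sel g)) atTop (𝓝 0) := by
        have : Tendsto (fun k => dist (V k g) (Sel g)) atTop (𝓝 (dist (Sel g) (Sel g))) :=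
          (tendsto_V g).dist (tendsto_const_nhds : Tendsto (fun _ : ℕ => Sel g) atTop (𝓝 (Sel g)))
        simpa [dist_self] using this
      simpa using ha.add hb
    exact squeeze_zero (fun k => dist_nonneg) h1 h2
  have : Tendsto (fun k => g (z k)) atTop (𝓝 (g (Sel g))) :=
    (g.continuous.tendsto _).comp hzt
  exact le_of_tendsto this (Eventually.of_forall fun k => hz2 k w)


section Integral

variable {m : ℕ} {Y : Type*} {mY : MeasurableSpace Y}

lemma integrable_continuousMap [MeasurableSpace K] [BorelSpace K]
    (c : C(K, Fin m → ℝ)) (μ : Measure K) [IsFiniteMeasure μ] :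
    Integrable (fun z => c z) μ :=
  c.continuous.integrable_of_hasCompactSupport (HasCompactSupport.of_compactSpace _)

lemma measurable_integral_simpleFunc [MeasurableSpace K] [BorelSpace K]
    (q' : Y → Measure K) (hqp : ∀ p, IsProbabilityMeasure (q' p))
    (hq' : ∀ g : C(K, ℝ), Measurable fun p => ∫ z, g z ∂(q' p))
    (f : SimpleFunc Y C(K, Fin m → ℝ)) :
    Measurable fun p => ∫ z, (f p) z ∂(q' p) := by
  haveI := hqp
  induction f using SimpleFunc.induction with
  | @const c s hs =>
    have heq : (fun p => ∫ z, ((SimpleFunc.piecewise s hs (SimpleFunc.const _ c)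
        (SimpleFunc.const _ (0 : C(K, Fin m → ℝ)))) p) z ∂(q' p))
        = s.indicator (fun p => ∫ z, c z ∂(q' p)) := by
      funext p
      by_cases hp : p ∈ s
      · simp [SimpleFunc.piecewise_apply, hp, Set.indicator_of_mem]
      · simp [SimpleFunc.piecewise_apply, hp, Set.indicator_of_notMem]
    rw [heq]
    refine Measurable.indicator ?_ hs
    refine measurable_pi_lambda _ fun i => ?_
    have hcoord : ∀ p : Y, (∫ z, c z ∂(q' p)) i = ∫ z, c z i ∂(q' p) := by
      intro p
      exact ((ContinuousLinearMap.proj (R := ℝ) (φ := fun _ : Fin m => ℝ) i).integral_comp_comm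
        (integrable_continuousMap c (q' p))).symm
    simp only [hcoord]
    exact hq' (ContinuousMap.mk (fun z => c z i) ((continuous_apply i).comp c.continuous))
  | @add f g _ hf hg =>
    have heq : (fun p => ∫ z, ((f + g) p) z ∂(q' p))
        = fun p => (∫ z, (f p) z ∂(q' p)) + ∫ z, (g p) z ∂(q' p) := by
      funext p
      rw [← integral_add (integrable_continuousMap _ _) (integrable_continuousMap _ _)]
      simp [SimpleFunc.coe_add]
    rw [heq]
    exact hf.add hg

lemma measurable_integral_param [MeasurableSpace K] [BorelSpace K]
    (q' : Y → Measure K) (hqp : ∀ p, IsProbabilityMeasure (q' p))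
    (hq' : ∀ g : C(K, ℝ), Measurable fun p => ∫ z, g z ∂(q' p))
    (G : Y → C(K, Fin m → ℝ)) (hG : StronglyMeasurable G)
    (c : ℝ) (hc : 0 ≤ c) (hGb : ∀ p, ‖G p‖ ≤ c) :
    Measurable fun p => ∫ z, (G p) z ∂(q' p) := by
  haveI := hqp
  have key : ∀ p : Y, Tendsto (fun n => ∫ z, (hG.approxBounded c n p) z ∂(q' p)) atTop
      (𝓝 (∫ z, (G p) z ∂(q' p))) := by
    intro p
    have htd : Tendsto (fun n => hG.approxBounded c n p) atTop (𝓝 (G p)) :=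
      hG.tendsto_approxBounded_of_norm_le (hGb p)
    refine tendsto_integral_of_dominated_convergence (fun _ => c)
      (fun n => (hG.approxBounded c n p).continuous.aestronglyMeasurable)
      (integrable_const c) (fun n => Eventually.of_forall fun z => ?_)
      (Eventually.of_forall fun z => ?_)
    · exact (ContinuousMap.norm_coe_le_norm _ z).trans (hG.norm_approxBounded_le hc n p)
    · exact ((ContinuousEvalConst.continuous_eval_const z).tendsto (G p)).comp htd
  exact measurable_of_tendsto_metrizable
    (fun n => measurable_integral_simpleFunc q' hqp hq' (hG.approxBounded c n))
    (tendsto_pi_nhds.2 key)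

end Integral

end RelaxedSel
-- main theorem part, to be appended
open MeasureTheory Filter Topology

/-- the continuous "distance to barycenter" functional -/
noncomputable def RelaxedSel.Psi {K : Type*} [MetricSpace K] [CompactSpace K] {m : ℕ}
    (fe : C(K, Fin m → ℝ) × (Fin m → ℝ)) : C(K, ℝ) :=
  ContinuousMap.mk (fun z => ‖fe.1 z - fe.2‖)
    (continuous_norm.comp ((map_continuous fe.1).sub continuous_const))

lemma RelaxedSel.continuous_Psi {K : Type*} [MetricSpace K] [CompactSpace K] [Nonempty K] {m : ℕ} :
    Continuous (RelaxedSel.Psi (K := K) (m := m)) := by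
  refine (LipschitzWith.of_dist_le_mul (K := 2) fun p q => ?_).continuous
  rw [ContinuousMap.dist_le (by positivity)]
  intro x
  have h1 : dist (Psi p x) (Psi q x) ≤ ‖(p.1 x - p.2) - (q.1 x - q.2)‖ := by
    simp only [Psi, ContinuousMap.coe_mk, Real.dist_eq]
    exact abs_norm_sub_norm_le _ _
  have h2 : ‖(p.1 x - p.2) - (q.1 x - q.2)‖ ≤ ‖p.1 x - q.1 x‖ + ‖p.2 - q.2‖ := by
    have : (p.1 x - p.2) - (q.1 x - q.2) = (p.1 x - q.1 x) + (q.2 - p.2) := by abel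
    rw [this]
    refine (norm_add_le _ _).trans ?_
    rw [norm_sub_rev (q.2)]
  have h3 : ‖p.1 x - q.1 x‖ ≤ dist p.1 q.1 := by
    rw [← dist_eq_norm]; exact ContinuousMap.dist_apply_le_dist x
  have h4 : ‖p.2 - q.2‖ ≤ dist p.2 q.2 := by rw [dist_eq_norm]
  have h5 : dist p.1 q.1 ≤ dist p q := le_max_left _ _
  have h6 : dist p.2 q.2 ≤ dist p q := le_max_right _ _
  calc dist (Psi p x) (Psi q x) ≤ ‖p.1 x - q.1 x‖ + ‖p.2 - q.2‖ := h1.trans h2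
  _ ≤ 2 * dist p q := by linarith

/-- Measurable selection for relaxed controls: if `F(t,ω,·) : K → ℝᵐ` is a bounded,
progressively measurable family of continuous functions with `F(t,ω,K)` convex, and
`q(t,ω,du)` is a progressively measurable family of probability measures on `K`,
then there is a progressively measurable `K`-valued process `Û` with
`∫_K F(t,ω,u) q(t,ω,du) = F(t,ω,Û(t,ω))` for `dt⊗P`-a.e. `(t,ω)`. -/
theorem measurable_selection_relaxed
    {Ω : Type*} {mΩ : MeasurableSpace Ω} (P : Measure Ω) [IsProbabilityMeasure P]
    (T : ℝ) (hT : 0 < T) (𝓕 : Filtration ℝ mΩ)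
    (K : Type*) [MetricSpace K] [CompactSpace K] [Nonempty K]
    [MeasurableSpace K] [BorelSpace K]
    {m : ℕ}
    (F : ℝ → Ω → C(K, Fin m → ℝ))
    (hFprog : ProgMeasurable 𝓕 F)
    (hFbdd : ∃ B, ∀ t ω u, ‖F t ω u‖ ≤ B)
    (hconv : ∀ t ω, Convex ℝ (Set.range (F t ω)))
    (q : ℝ → Ω → Measure K) (hq : ∀ t ω, IsProbabilityMeasure (q t ω))
    (hqprog : ∀ g : C(K, ℝ), ProgMeasurable 𝓕 (fun t ω => ∫ u, g u ∂(q t ω))) :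
    ∃ U : ℝ → Ω → K, ProgMeasurable 𝓕 U ∧
      ∀ᵐ p ∂((volume.restrict (Set.Icc (0:ℝ) T)).prod P),
        (∫ u, F p.1 p.2 u ∂(q p.1 p.2)) = F p.1 p.2 (U p.1 p.2) := by
  classical
  obtain ⟨B, hB⟩ := hFbdd
  set bary : ℝ → Ω → (Fin m → ℝ) := fun t ω => ∫ z, F t ω z ∂(q t ω) with hbary
  set U : ℝ → Ω → K := fun t ω => RelaxedSel.Sel (RelaxedSel.Psi (F t ω, bary t ω)) with hU
  have key : ∀ t ω, (∫ z, F t ω z ∂(q t ω)) = F t ω (U t ω) := by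
    intro t ω
    haveI := hq t ω
    have hmem : bary t ω ∈ Set.range (F t ω) := by
      refine (hconv t ω).integral_mem ((isCompact_range (map_continuous (F t ω))).isClosed)
        (Eventually.of_forall fun z => Set.mem_range_self z)
        (RelaxedSel.integrable_continuousMap (F t ω) (q t ω))
    obtain ⟨z₀, hz₀⟩ := hmem
    set g : C(K, ℝ) := RelaxedSel.Psi (F t ω, bary t ω) with hg
    have hgz₀ : g z₀ = 0 := by
      simp [hg, RelaxedSel.Psi, hz₀]
    have hle : g (RelaxedSel.Sel g) ≤ 0 := hgz₀ ▸ RelaxedSel.Sel_isMin g z₀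
    have hge : (0:ℝ) ≤ g (RelaxedSel.Sel g) := by
      simp only [hg, RelaxedSel.Psi, ContinuousMap.coe_mk]
      exact norm_nonneg _
    have : ‖F t ω (RelaxedSel.Sel g) - bary t ω‖ = 0 := le_antisymm hle hge
    have heq : F t ω (RelaxedSel.Sel g) = bary t ω := by
      rwa [norm_sub_eq_zero_iff] at this
    rw [hbary] at heq
    exact heq.symm
  refine ⟨U, ?_, Eventually.of_forall fun p => key p.1 p.2⟩
  -- progressive measurability
  intro i
  letI M : MeasurableSpace (↥(Set.Iic i) × Ω) := Subtype.instMeasurableSpace.prod (𝓕 i)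
  have hG : StronglyMeasurable[M] (fun p : ↥(Set.Iic i) × Ω => F p.1 p.2) := hFprog i
  have hq' : ∀ g : C(K, ℝ),
      Measurable[M] (fun p : ↥(Set.Iic i) × Ω => ∫ z, g z ∂(q p.1 p.2)) :=
    fun g => (hqprog g i).measurable
  have hGb : ∀ p : ↥(Set.Iic i) × Ω, ‖F p.1 p.2‖ ≤ max B 0 := by
    intro p
    rw [ContinuousMap.norm_le _ (le_max_right _ _)]
    exact fun x => (hB _ _ x).trans (le_max_left _ _)
  have hbm : Measurable[M] (fun p : ↥(Set.Iic i) × Ω => bary p.1 p.2) :=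
    RelaxedSel.measurable_integral_param (mY := M) (fun p => q p.1 p.2) (fun p => hq _ _)
      hq' _ hG (max B 0) (le_max_right _ _) hGb
  have hΦ : StronglyMeasurable[M]
      (fun p : ↥(Set.Iic i) × Ω => RelaxedSel.Psi (F p.1 p.2, bary p.1 p.2)) :=
    RelaxedSel.continuous_Psi.comp_stronglyMeasurable (hG.prodMk hbm.stronglyMeasurable)
  exact (RelaxedSel.measurable_Sel.comp hΦ.measurable).stronglyMeasurable
end

section
/- Stability of the drift functional under joint convergence: Let h : [0,T]×ℝ^d×ℝ^k×K → ℝ^k be bounded, measurable, Lipschitz in (x,y) uniformly, and continuous in u. If Xₙ → X uniformly on [0,T], Yₙ → Y pointwise dt-a.e. with uniform L² bounds, and qₙ → q stably in V (measures on [0,T]×K with time-marginal Lebesgue), then ∫ₜᵀ∫_K h(s,Xₙ(s),Yₙ(s),u) qₙ(ds,du) → ∫ₜᵀ∫_K h(s,X(s),Y(s),u) q(ds,du). -/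
open MeasureTheory Filter

lemma integrable_of_bdd' {α E : Type*} [MeasurableSpace α] [NormedAddCommGroup E]
    {μ : Measure α} (hμ : μ Set.univ < ⊤) {f : α → E}
    (hf : AEStronglyMeasurable f μ) {M : ℝ} (hM : ∀ a, ‖f a‖ ≤ M) :
    Integrable f μ := by
  haveI : IsFiniteMeasure μ := ⟨hμ⟩
  exact ⟨hf, HasFiniteIntegral.of_bounded (Filter.Eventually.of_forall hM)⟩

/-- Stability of the drift functional under joint convergence: if `h` is bounded,
measurable, Lipschitz in `(x,y)` uniformly and continuous in `u`; `Xₙ → X`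
uniformly on `[0,T]`; `Yₙ → Y` `dt`-a.e. with a uniform `L²` bound; and `qₙ → q`
stably among measures on `[0,T]×K` with time-marginal Lebesgue, then
`∫_{[t,T]×K} h(s,Xₙ(s),Yₙ(s),u) dqₙ → ∫_{[t,T]×K} h(s,X(s),Y(s),u) dq`. -/
theorem drift_functional_stable
    (T : ℝ) (hT : 0 < T) {d k : ℕ}
    (K : Type*) [MetricSpace K] [CompactSpace K] [MeasurableSpace K] [BorelSpace K]
    (h : ℝ → (Fin d → ℝ) → (Fin k → ℝ) → K → (Fin k → ℝ))
    (M C : ℝ)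
    (hbdd : ∀ s x y u, ‖h s x y u‖ ≤ M)
    (hmeas : Measurable fun p : ℝ × (Fin d → ℝ) × (Fin k → ℝ) × K =>
      h p.1 p.2.1 p.2.2.1 p.2.2.2)
    (hLip : ∀ s x x' y y' u, ‖h s x y u - h s x' y' u‖ ≤ C * (‖x - x'‖ + ‖y - y'‖))
    (hcont : ∀ s x y, Continuous (h s x y))
    (X : ℕ → ℝ → (Fin d → ℝ)) (Xlim : ℝ → (Fin d → ℝ))
    (hXcont : ∀ n, Continuous (X n)) (hXlimcont : Continuous Xlim)
    (hXunif : TendstoUniformlyOn X Xlim atTop (Set.Icc 0 T))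
    (Y : ℕ → ℝ → (Fin k → ℝ)) (Ylim : ℝ → (Fin k → ℝ))
    (hYmeas : ∀ n, Measurable (Y n)) (hYlimmeas : Measurable Ylim)
    (hYae : ∀ᵐ s ∂(volume.restrict (Set.Icc (0:ℝ) T)),
      Tendsto (fun n => Y n s) atTop (nhds (Ylim s)))
    (CY : ℝ) (hYL2 : ∀ n, ∫ s in (0:ℝ)..T, ‖Y n s‖ ^ 2 ≤ CY)
    (q : ℕ → Measure (ℝ × K)) (qlim : Measure (ℝ × K))
    (hmarg : ∀ n, (q n).map Prod.fst = volume.restrict (Set.Icc (0:ℝ) T))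
    (hmarglim : qlim.map Prod.fst = volume.restrict (Set.Icc (0:ℝ) T))
    (hstable : ∀ φ : ℝ × K → ℝ, Measurable φ → (∀ s, Continuous fun u => φ (s, u)) →
      (∃ B, ∀ p, |φ p| ≤ B) →
      Tendsto (fun n => ∫ p, φ p ∂(q n)) atTop (nhds (∫ p, φ p ∂qlim)))
    (t : ℝ) (ht : t ∈ Set.Icc (0:ℝ) T) :
    Tendsto
      (fun n => ∫ p in Set.Icc t T ×ˢ (Set.univ : Set K),
        h p.1 (X n p.1) (Y n p.1) p.2 ∂(q n))
      atTop
      (nhds (∫ p in Set.Icc t T ×ˢ (Set.univ : Set K),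
        h p.1 (Xlim p.1) (Ylim p.1) p.2 ∂qlim)) := by
  set A : Set (ℝ × K) := Set.Icc t T ×ˢ (Set.univ : Set K) with hAdef
  have hAmeas : MeasurableSet A := measurableSet_Icc.prod MeasurableSet.univ
  have hfin : ∀ μ : Measure (ℝ × K), μ.map Prod.fst = volume.restrict (Set.Icc (0:ℝ) T) →
      μ Set.univ < ⊤ := by
    intro μ hμ
    have h1 : (μ.map Prod.fst) Set.univ = μ Set.univ := by
      rw [Measure.map_apply measurable_fst MeasurableSet.univ, Set.preimage_univ]
    rw [← h1, hμ, Measure.restrict_apply_univ, Real.volume_Icc]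
    exact ENNReal.ofReal_lt_top
  have hfinn : ∀ n, (q n) Set.univ < ⊤ := fun n => hfin _ (hmarg n)
  have hfinlim : qlim Set.univ < ⊤ := hfin _ hmarglim
  have hmeasF : ∀ (Z : ℝ → Fin d → ℝ) (W : ℝ → Fin k → ℝ), Measurable Z → Measurable W →
      Measurable (fun p : ℝ × K => h p.1 (Z p.1) (W p.1) p.2) := by
    intro Z W hZ hW
    exact hmeas.comp (measurable_fst.prodMk ((hZ.comp measurable_fst).prodMk
      ((hW.comp measurable_fst).prodMk measurable_snd)))
  have hintn : ∀ n, Integrable (fun p : ℝ × K => h p.1 (X n p.1) (Y n p.1) p.2) (q n) :=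
    fun n => integrable_of_bdd' (hfinn n)
      ((hmeasF _ _ (hXcont n).measurable (hYmeas n)).aestronglyMeasurable)
      (fun p => hbdd _ _ _ _)
  have hintn' : ∀ n, Integrable (fun p : ℝ × K => h p.1 (Xlim p.1) (Ylim p.1) p.2) (q n) :=
    fun n => integrable_of_bdd' (hfinn n)
      ((hmeasF _ _ hXlimcont.measurable hYlimmeas).aestronglyMeasurable)
      (fun p => hbdd _ _ _ _)
  have hintlim : Integrable (fun p : ℝ × K => h p.1 (Xlim p.1) (Ylim p.1) p.2) qlim :=
    integrable_of_bdd' hfinlim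
      ((hmeasF _ _ hXlimcont.measurable hYlimmeas).aestronglyMeasurable)
      (fun p => hbdd _ _ _ _)
  set I : ℕ → Fin k → ℝ := fun n => ∫ p in A, h p.1 (X n p.1) (Y n p.1) p.2 ∂(q n) with hI
  set J : ℕ → Fin k → ℝ := fun n => ∫ p in A, h p.1 (Xlim p.1) (Ylim p.1) p.2 ∂(q n) with hJ
  set Jlim : Fin k → ℝ := ∫ p in A, h p.1 (Xlim p.1) (Ylim p.1) p.2 ∂qlim with hJl
  -- Step 2 : J → Jlim via stable convergence, componentwise
  have hcomp : ∀ (μ : Measure (ℝ × K)),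
      Integrable (fun p : ℝ × K => h p.1 (Xlim p.1) (Ylim p.1) p.2) μ → ∀ i : Fin k,
      (∫ p in A, h p.1 (Xlim p.1) (Ylim p.1) p.2 ∂μ) i
        = ∫ p, A.indicator (fun p : ℝ × K => h p.1 (Xlim p.1) (Ylim p.1) p.2 i) p ∂μ := by
    intro μ hint i
    rw [integral_indicator hAmeas]
    have hres : Integrable (fun p : ℝ × K => h p.1 (Xlim p.1) (Ylim p.1) p.2)
        (μ.restrict A) := hint.restrict
    have e1 := ContinuousLinearMap.integral_comp_comm
      (ContinuousLinearMap.proj (R := ℝ) (φ := fun _ : Fin k => ℝ) i) hres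
    simp only [ContinuousLinearMap.proj_apply] at e1
    exact e1.symm
  have step2 : Tendsto J atTop (nhds Jlim) := by
    rw [tendsto_pi_nhds]
    intro i
    set φ : ℝ × K → ℝ :=
      A.indicator (fun p : ℝ × K => h p.1 (Xlim p.1) (Ylim p.1) p.2 i) with hφ
    have hφmeas : Measurable φ :=
      ((measurable_pi_apply i).comp (hmeasF _ _ hXlimcont.measurable hYlimmeas)).indicator hAmeas
    have hφcont : ∀ s, Continuous fun u : K => φ (s, u) := by
      intro s
      by_cases hs : s ∈ Set.Icc t T
      · have e : (fun u : K => φ (s, u))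
            = fun u : K => h s (Xlim s) (Ylim s) u i :=
          funext fun u => Set.indicator_of_mem (Set.mk_mem_prod hs (Set.mem_univ u)) _
        rw [e]
        exact (continuous_apply i).comp (hcont s (Xlim s) (Ylim s))
      · have e : (fun u : K => φ (s, u)) = fun _ : K => (0:ℝ) :=
          funext fun u => Set.indicator_of_notMem (fun hm => hs hm.1) _
        rw [e]; exact continuous_const
    have hφbdd : ∃ B, ∀ p, |φ p| ≤ B := by
      refine ⟨|M|, fun p => ?_⟩
      rw [hφ]
      by_cases hp : p ∈ A
      · rw [Set.indicator_of_mem hp, ← Real.norm_eq_abs]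
        exact le_trans (norm_le_pi_norm (h p.1 (Xlim p.1) (Ylim p.1) p.2) i)
          (le_trans (hbdd _ _ _ _) (le_abs_self M))
      · rw [Set.indicator_of_notMem hp]
        simp only [abs_zero]
        exact abs_nonneg M
    have hst := hstable _ hφmeas hφcont hφbdd
    have e1 : (fun n => J n i) = fun n => ∫ p, φ p ∂(q n) :=
      funext fun n => hcomp (q n) (hintn' n) i
    have e2 : Jlim i = ∫ p, φ p ∂qlim := hcomp qlim hintlim i
    rw [e1, e2]
    exact hst
  -- Step 1 : I - J → 0
  set g : ℕ → ℝ → ℝ :=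
    fun n s => min (2 * |M|) (|C| * (‖X n s - Xlim s‖ + ‖Y n s - Ylim s‖)) with hg
  have hgnonneg : ∀ n s, 0 ≤ g n s := fun n s =>
    le_min (by positivity) (by positivity)
  have hgmeas : ∀ n, Measurable (g n) := fun n =>
    measurable_const.min ((((hXcont n).sub hXlimcont).norm.measurable.add
      (((hYmeas n).sub hYlimmeas).norm)).const_mul |C|)
  have hkey : ∀ n (p : ℝ × K),
      ‖h p.1 (X n p.1) (Y n p.1) p.2 - h p.1 (Xlim p.1) (Ylim p.1) p.2‖ ≤ g n p.1 := by
    intro n p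
    refine le_min ?_ ?_
    · calc ‖h p.1 (X n p.1) (Y n p.1) p.2 - h p.1 (Xlim p.1) (Ylim p.1) p.2‖
          ≤ ‖h p.1 (X n p.1) (Y n p.1) p.2‖ + ‖h p.1 (Xlim p.1) (Ylim p.1) p.2‖ :=
            norm_sub_le _ _
        _ ≤ M + M := add_le_add (hbdd _ _ _ _) (hbdd _ _ _ _)
        _ ≤ |M| + |M| := add_le_add (le_abs_self M) (le_abs_self M)
        _ = 2 * |M| := (two_mul _).symm
    · calc ‖h p.1 (X n p.1) (Y n p.1) p.2 - h p.1 (Xlim p.1) (Ylim p.1) p.2‖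
          ≤ C * (‖X n p.1 - Xlim p.1‖ + ‖Y n p.1 - Ylim p.1‖) := hLip _ _ _ _ _ _
        _ ≤ |C| * (‖X n p.1 - Xlim p.1‖ + ‖Y n p.1 - Ylim p.1‖) :=
            mul_le_mul_of_nonneg_right (le_abs_self C) (by positivity)
  have key : ∀ n, ‖I n - J n‖ ≤ ∫ s in Set.Icc (0:ℝ) T, g n s := by
    intro n
    have hgint : Integrable (fun p : ℝ × K => g n p.1) (q n) :=
      integrable_of_bdd' (hfinn n) (((hgmeas n).comp measurable_fst).aestronglyMeasurable)
        (M := 2 * |M|) (fun p => by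
          rw [Real.norm_eq_abs, abs_of_nonneg (hgnonneg n p.1)]; exact min_le_left _ _)
    calc ‖I n - J n‖
        = ‖∫ p in A, (h p.1 (X n p.1) (Y n p.1) p.2
            - h p.1 (Xlim p.1) (Ylim p.1) p.2) ∂(q n)‖ := by
          rw [hI, hJ, integral_sub (hintn n).integrableOn (hintn' n).integrableOn]
      _ ≤ ∫ p in A, ‖h p.1 (X n p.1) (Y n p.1) p.2
            - h p.1 (Xlim p.1) (Ylim p.1) p.2‖ ∂(q n) := norm_integral_le_integral_norm _
      _ ≤ ∫ p in A, g n p.1 ∂(q n) :=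
          integral_mono_of_nonneg (Filter.Eventually.of_forall fun p => norm_nonneg _)
            hgint.integrableOn (Filter.Eventually.of_forall fun p => hkey n p)
      _ ≤ ∫ p, g n p.1 ∂(q n) :=
          setIntegral_le_integral hgint (Filter.Eventually.of_forall fun p => hgnonneg n p.1)
      _ = ∫ s, g n s ∂((q n).map Prod.fst) :=
          (integral_map measurable_fst.aemeasurable ((hgmeas n).aestronglyMeasurable)).symm
      _ = ∫ s in Set.Icc (0:ℝ) T, g n s := by rw [hmarg n]
  have hDCT : Tendsto (fun n => ∫ s in Set.Icc (0:ℝ) T, g n s) atTop (nhds 0) := by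
    haveI : IsFiniteMeasure (volume.restrict (Set.Icc (0:ℝ) T)) := ⟨by
      rw [Measure.restrict_apply_univ, Real.volume_Icc]; exact ENNReal.ofReal_lt_top⟩
    have hmain : Tendsto (fun n => ∫ s in Set.Icc (0:ℝ) T, g n s) atTop
        (nhds (∫ _ in Set.Icc (0:ℝ) T, (0:ℝ))) := by
      refine tendsto_integral_of_dominated_convergence (fun _ => 2 * |M|)
        (fun n => (hgmeas n).aestronglyMeasurable) (integrable_const _)
        (fun n => Filter.Eventually.of_forall fun s => ?_) ?_
      · rw [Real.norm_eq_abs, abs_of_nonneg (hgnonneg n s)]; exact min_le_left _ _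
      · filter_upwards [hYae, ae_restrict_mem measurableSet_Icc] with s hYs hs
        have hx : Tendsto (fun n => ‖X n s - Xlim s‖) atTop (nhds 0) := by
          have h1 := hXunif.tendsto_at hs
          rwa [tendsto_iff_norm_sub_tendsto_zero] at h1
        have hy : Tendsto (fun n => ‖Y n s - Ylim s‖) atTop (nhds 0) := by
          rwa [tendsto_iff_norm_sub_tendsto_zero] at hYs
        have hlim : Tendsto (fun n => g n s) atTop
            (nhds (min (2 * |M|) (|C| * ((0:ℝ) + 0)))) :=
          tendsto_const_nhds.min ((hx.add hy).const_mul |C|)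
        have e : min (2 * |M|) (|C| * ((0:ℝ) + 0)) = 0 := by
          rw [add_zero, mul_zero]; exact min_eq_right (by positivity)
        rwa [e] at hlim
    simpa using hmain
  have step1 : Tendsto (fun n => I n - J n) atTop (nhds 0) := by
    rw [tendsto_zero_iff_norm_tendsto_zero]
    exact squeeze_zero (fun n => norm_nonneg _) key hDCT
  have hfinal := step1.add step2
  rw [zero_add] at hfinal
  have e : (fun n => (I n - J n) + J n) = I := funext fun n => by abel
  rwa [e] at hfinal
end
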